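/- Let N ≥ 2 be an integer, R > 0 and p > 0. Then every positive radial solution (u,v) of the system Δu = v^p, Δv = e^{|∇u|} on the ball B_R either is bounded (both u and v bounded on [0,R)) or satisfies that u is bounded on [0,R) and v(r) → ∞ as r → R⁻; in particular the u-component of every such solution is bounded. -/

import Mathlib

set_option maxHeartbeats 1000000

open MeasureTheory Set Filter

/-- `(u, v)` is a positive radial solution of `Δu = v^p`, `Δv = exp(|∇u|)` on the ball `B_R`,
written in radial coordinates. -/
def IsPositiveRadialSolExp (N : ℕ) (R p : ℝ) (u v : ℝ → ℝ) : Prop :=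
  ContDiffOn ℝ 2 u (Set.Ico 0 R) ∧ ContDiffOn ℝ 2 v (Set.Ico 0 R) ∧
  (∀ r ∈ Set.Ico (0:ℝ) R, 0 < u r ∧ 0 < v r) ∧
  deriv u 0 = 0 ∧ deriv v 0 = 0 ∧
  (∀ r ∈ Set.Ioo (0:ℝ) R,
    deriv (deriv u) r + ((N : ℝ) - 1) / r * deriv u r = v r ^ p) ∧
  (∀ r ∈ Set.Ioo (0:ℝ) R,
    deriv (deriv v) r + ((N : ℝ) - 1) / r * deriv v r = Real.exp |deriv u r|)

/-- bound for `x (log x - 1)` on `(0, R]`. -/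
lemma aux_xlog {R x : ℝ} (hR : 0 < R) (hx : 0 < x) (hxR : x ≤ R) :
    x * (Real.log x - 1) ≤ R * (1 + |Real.log R|) := by
  have hRpos : 0 < R * (1 + |Real.log R|) := by positivity
  rcases le_or_gt (Real.log x - 1) 0 with h | h
  · nlinarith
  · have hlog : Real.log x ≤ Real.log R := Real.log_le_log hx hxR
    have h1 : Real.log x - 1 ≤ |Real.log R| := by
      have := le_abs_self (Real.log R); linarith
    nlinarith [abs_nonneg (Real.log R)]

/-- Every positive radial solution of `Δu = v^p`, `Δv = e^{|∇u|}` in `B_R` is either bounded,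
or has `u` bounded and `v(r) → ∞` as `r → R⁻`; in particular `u` is always bounded. -/
theorem exp_system_dichotomy (N : ℕ) (hN : 2 ≤ N) (R p : ℝ) (hR : 0 < R) (hp : 0 < p)
    (u v : ℝ → ℝ) (huv : IsPositiveRadialSolExp N R p u v) :
    ((∃ M, ∀ r ∈ Set.Ico (0:ℝ) R, u r ≤ M) ∧ (∃ M, ∀ r ∈ Set.Ico (0:ℝ) R, v r ≤ M)) ∨
      ((∃ M, ∀ r ∈ Set.Ico (0:ℝ) R, u r ≤ M) ∧
        Tendsto v (nhdsWithin R (Set.Iio R)) atTop) := by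
  obtain ⟨hu, hv, hpos, -, -, hequ, heqv⟩ := huv
  obtain ⟨n, rfl⟩ : ∃ n, N = n + 2 := ⟨N - 2, by omega⟩
  clear hN
  set J : Set ℝ := Set.Ioo 0 R with hJdef
  have hJo : IsOpen J := isOpen_Ioo
  have hJs : J ⊆ Set.Ico 0 R := Set.Ioo_subset_Ico_self
  have hu0 : ∀ x ∈ Set.Ico (0:ℝ) R, 0 < u x := fun x hx => (hpos x hx).1
  have hv0 : ∀ x ∈ Set.Ico (0:ℝ) R, 0 < v x := fun x hx => (hpos x hx).2
  -- regularity for u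
  have huJ : ContDiffOn ℝ 2 u J := hu.mono hJs
  have hdu : ContDiffOn ℝ 1 (deriv u) J := huJ.deriv_of_isOpen hJo (by norm_num)
  have hdiffu : DifferentiableOn ℝ u J := huJ.differentiableOn (by norm_num)
  have hud : ∀ x ∈ J, HasDerivAt u (deriv u x) x := fun x hx =>
    (hdiffu.differentiableAt (hJo.mem_nhds hx)).hasDerivAt
  have hUd : ∀ x ∈ J, HasDerivAt (deriv u) (deriv (deriv u) x) x := fun x hx =>
    ((hdu.differentiableOn (by norm_num)).differentiableAt (hJo.mem_nhds hx)).hasDerivAt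
  have hUc : ContinuousOn (deriv u) J := hdu.continuousOn
  -- regularity for v
  have hvJ : ContDiffOn ℝ 2 v J := hv.mono hJs
  have hdv : ContDiffOn ℝ 1 (deriv v) J := hvJ.deriv_of_isOpen hJo (by norm_num)
  have hdiffv : DifferentiableOn ℝ v J := hvJ.differentiableOn (by norm_num)
  have hvd : ∀ x ∈ J, HasDerivAt v (deriv v x) x := fun x hx =>
    (hdiffv.differentiableAt (hJo.mem_nhds hx)).hasDerivAt
  have hVd : ∀ x ∈ J, HasDerivAt (deriv v) (deriv (deriv v) x) x := fun x hx =>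
    ((hdv.differentiableOn (by norm_num)).differentiableAt (hJo.mem_nhds hx)).hasDerivAt
  have hVc : ContinuousOn (deriv v) J := hdv.continuousOn
  -- rewritten equations
  have hequ' : ∀ x ∈ J, deriv (deriv u) x = v x ^ p - ((n:ℝ)+1)/x * deriv u x := by
    intro x hx
    have h := hequ x hx
    have : ((n+2 : ℕ) : ℝ) - 1 = (n:ℝ)+1 := by push_cast; ring
    rw [this] at h; linarith
  have heqv' : ∀ x ∈ J, deriv (deriv v) x = Real.exp |deriv u x| - ((n:ℝ)+1)/x * deriv v x := by
    intro x hx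
    have h := heqv x hx
    have : ((n+2 : ℕ) : ℝ) - 1 = (n:ℝ)+1 := by push_cast; ring
    rw [this] at h; linarith
  -- boundedness of deriv near 0 (within Ioi 0)
  have hbd0 : ∀ w : ℝ → ℝ, ContDiffOn ℝ 2 w (Set.Ico 0 R) →
      ∃ C : ℝ, 0 ≤ C ∧ ∀ᶠ r in nhdsWithin (0:ℝ) (Set.Ioi 0), |deriv w r| ≤ C := by
    intro w hw
    have h1 : ContinuousOn (derivWithin w (Set.Ico 0 R)) (Set.Ico 0 R) :=
      (hw.derivWithin (m := 1) (uniqueDiffOn_Ico 0 R) (by norm_num)).continuousOn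
    have h2 := h1 0 (Set.left_mem_Ico.2 hR)
    have h3 : ∀ᶠ r in nhdsWithin (0:ℝ) (Set.Ico 0 R),
        |derivWithin w (Set.Ico 0 R) r| ≤ |derivWithin w (Set.Ico 0 R) 0| + 1 := by
      have := h2.tendsto (Metric.ball_mem_nhds _ one_pos)
      filter_upwards [this] with r hr
      simp only [Set.mem_preimage, Metric.mem_ball, Real.dist_eq] at hr
      have := abs_sub_abs_le_abs_sub (derivWithin w (Set.Ico 0 R) r) (derivWithin w (Set.Ico 0 R) 0)
      linarith
    have hle : nhdsWithin (0:ℝ) (Set.Ioi 0) ≤ nhdsWithin (0:ℝ) (Set.Ico 0 R) := by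
      rw [← nhdsWithin_Ioo_eq_nhdsGT hR]
      exact nhdsWithin_mono 0 hJs
    refine ⟨|derivWithin w (Set.Ico 0 R) 0| + 1, by positivity, ?_⟩
    filter_upwards [hle h3, Ioo_mem_nhdsGT_of_mem (Set.left_mem_Ico.2 hR)] with r h4 h5
    rwa [derivWithin_of_mem_nhds (mem_nhds_iff.2 ⟨J, hJs, hJo, h5⟩)] at h4
  -- tendsto-zero helper
  have tend_aux : ∀ (k : ℕ) (F : ℝ → ℝ) (C : ℝ), 1 ≤ k →
      (∀ᶠ r in nhdsWithin (0:ℝ) (Set.Ioi 0), |F r| ≤ C) →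
      Tendsto (fun r => r ^ k * F r) (nhdsWithin (0:ℝ) (Set.Ioi 0)) (nhds 0) := by
    intro k F C hk hF
    have hC : Tendsto (fun r : ℝ => C * r) (nhdsWithin (0:ℝ) (Set.Ioi 0)) (nhds 0) := by
      have : Tendsto (fun r : ℝ => C * r) (nhds (0:ℝ)) (nhds (C * 0)) :=
        (continuous_const.mul continuous_id).tendsto 0
      rw [mul_zero] at this
      exact this.mono_left nhdsWithin_le_nhds
    refine squeeze_zero_norm' ?_ hC
    filter_upwards [hF, Ioo_mem_nhdsGT_of_mem (show (0:ℝ) ∈ Set.Ico 0 1 by norm_num)]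
      with r h1 h2
    have hr0 : 0 < r := h2.1
    have hr1 : r ≤ 1 := le_of_lt h2.2
    have hpow : r ^ k ≤ r := by
      calc r ^ k ≤ r ^ 1 := pow_le_pow_of_le_one (le_of_lt hr0) hr1 hk
      _ = r := pow_one r
    have hF0 : 0 ≤ |F r| := abs_nonneg _
    calc ‖r ^ k * F r‖ = r ^ k * |F r| := by
          rw [Real.norm_eq_abs, abs_mul, abs_of_nonneg (pow_nonneg (le_of_lt hr0) k)]
    _ ≤ r * C := by nlinarith [abs_nonneg (F r), le_trans (abs_nonneg (F r)) h1]
    _ = C * r := mul_comm r C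
  -- nonneg from monotone + tendsto 0
  have key0 : ∀ f : ℝ → ℝ, MonotoneOn f J →
      Tendsto f (nhdsWithin (0:ℝ) (Set.Ioi 0)) (nhds 0) → ∀ r ∈ J, 0 ≤ f r := by
    intro f hm hl r hr
    refine le_of_tendsto hl ?_
    filter_upwards [Ioo_mem_nhdsGT_of_mem (Set.left_mem_Ico.2 hr.1)] with s hs
    exact hm ⟨hs.1, hs.2.trans hr.2⟩ hr (le_of_lt hs.2)
  -- v bounded near 0, v^p bounded, exp(deriv u) bounded near 0
  obtain ⟨Cu, hCu0, hCu⟩ := hbd0 u hu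
  obtain ⟨Cv, hCv0, hCv⟩ := hbd0 v hv
  have hvb0 : ∃ B : ℝ, 0 < B ∧ ∀ᶠ r in nhdsWithin (0:ℝ) (Set.Ioi 0), |v r ^ p| ≤ B := by
    have h2 : ContinuousWithinAt v (Set.Ico 0 R) 0 := hv.continuousOn 0 (Set.left_mem_Ico.2 hR)
    have h3 : ∀ᶠ r in nhdsWithin (0:ℝ) (Set.Ico 0 R), v r < v 0 + 1 := by
      have := h2.tendsto (Iio_mem_nhds (show v 0 < v 0 + 1 by linarith))
      filter_upwards [this] with r hr using hr
    have hle : nhdsWithin (0:ℝ) (Set.Ioi 0) ≤ nhdsWithin (0:ℝ) (Set.Ico 0 R) := by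
      rw [← nhdsWithin_Ioo_eq_nhdsGT hR]; exact nhdsWithin_mono 0 hJs
    have hv01 : 0 < v 0 + 1 := by have := hv0 0 (Set.left_mem_Ico.2 hR); linarith
    refine ⟨(v 0 + 1) ^ p, Real.rpow_pos_of_pos hv01 p, ?_⟩
    filter_upwards [hle h3, Ioo_mem_nhdsGT_of_mem (Set.left_mem_Ico.2 hR)] with r h4 h5
    have hvr : 0 < v r := hv0 r (hJs h5)
    rw [abs_of_nonneg (Real.rpow_nonneg (le_of_lt hvr) p)]
    exact Real.rpow_le_rpow (le_of_lt hvr) (le_of_lt h4) (le_of_lt hp)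
  -- STEP 1 : deriv u > 0 on J
  have hg1d : ∀ x ∈ J, HasDerivAt (fun r => r ^ (n+1) * deriv u r)
      (x ^ (n+1) * v x ^ p) x := by
    intro x hx
    have h1 : HasDerivAt (fun r : ℝ => r ^ (n+1)) (((n:ℝ)+1) * x ^ n) x := by
      have := hasDerivAt_pow (n+1) x
      simpa using this
    have h2 := h1.mul (hUd x hx)
    refine h2.congr_deriv ?_
    rw [hequ' x hx]
    have hx0 : x ≠ 0 := ne_of_gt hx.1
    field_simp
    ring
  have hg1c : ContinuousOn (fun r => r ^ (n+1) * deriv u r) J :=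
    (continuous_pow (n+1)).continuousOn.mul hUc
  have hg1m : StrictMonoOn (fun r => r ^ (n+1) * deriv u r) J := by
    apply strictMonoOn_of_deriv_pos (convex_Ioo 0 R) hg1c
    intro x hx
    rw [interior_Ioo] at hx
    rw [(hg1d x hx).deriv]
    exact mul_pos (pow_pos hx.1 _) (Real.rpow_pos_of_pos (hv0 x (hJs hx)) p)
  have hg10 : Tendsto (fun r => r ^ (n+1) * deriv u r)
      (nhdsWithin (0:ℝ) (Set.Ioi 0)) (nhds 0) := tend_aux (n+1) _ Cu (by omega) hCu
  have hg1nn : ∀ r ∈ J, 0 ≤ r ^ (n+1) * deriv u r := key0 _ hg1m.monotoneOn hg10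
  have hUpos : ∀ r ∈ J, 0 < deriv u r := by
    intro r hr
    have hhalf : r/2 ∈ J := ⟨by linarith [hr.1], by linarith [hr.2]⟩
    have h1 := hg1nn (r/2) hhalf
    have h2 := hg1m hhalf hr (by linarith [hr.1])
    have h3 : 0 < r ^ (n+1) * deriv u r := lt_of_le_of_lt h1 h2
    nlinarith [pow_pos hr.1 (n+1)]
  -- STEP 2 : deriv v > 0 on J
  have hg2d : ∀ x ∈ J, HasDerivAt (fun r => r ^ (n+1) * deriv v r)
      (x ^ (n+1) * Real.exp |deriv u x|) x := by
    intro x hx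
    have h1 : HasDerivAt (fun r : ℝ => r ^ (n+1)) (((n:ℝ)+1) * x ^ n) x := by
      simpa using hasDerivAt_pow (n+1) x
    have h2 := h1.mul (hVd x hx)
    refine h2.congr_deriv ?_
    rw [heqv' x hx]
    have hx0 : x ≠ 0 := ne_of_gt hx.1
    field_simp
    ring
  have hg2c : ContinuousOn (fun r => r ^ (n+1) * deriv v r) J :=
    (continuous_pow (n+1)).continuousOn.mul hVc
  have hg2m : StrictMonoOn (fun r => r ^ (n+1) * deriv v r) J := by
    apply strictMonoOn_of_deriv_pos (convex_Ioo 0 R) hg2c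
    intro x hx
    rw [interior_Ioo] at hx
    rw [(hg2d x hx).deriv]
    exact mul_pos (pow_pos hx.1 _) (Real.exp_pos _)
  have hg20 : Tendsto (fun r => r ^ (n+1) * deriv v r)
      (nhdsWithin (0:ℝ) (Set.Ioi 0)) (nhds 0) := tend_aux (n+1) _ Cv (by omega) hCv
  have hg2nn : ∀ r ∈ J, 0 ≤ r ^ (n+1) * deriv v r := key0 _ hg2m.monotoneOn hg20
  have hVpos : ∀ r ∈ J, 0 < deriv v r := by
    intro r hr
    have hhalf : r/2 ∈ J := ⟨by linarith [hr.1], by linarith [hr.2]⟩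
    have h1 := hg2nn (r/2) hhalf
    have h2 := hg2m hhalf hr (by linarith [hr.1])
    have h3 : 0 < r ^ (n+1) * deriv v r := lt_of_le_of_lt h1 h2
    nlinarith [pow_pos hr.1 (n+1)]
  -- monotonicity of u and v on [0,R)
  have humono : MonotoneOn u (Set.Ico 0 R) := by
    apply monotoneOn_of_deriv_nonneg (convex_Ico 0 R) hu.continuousOn
    · rw [interior_Ico]; exact hdiffu
    · rw [interior_Ico]; exact fun x hx => le_of_lt (hUpos x hx)
  have hvmono : MonotoneOn v (Set.Ico 0 R) := by
    apply monotoneOn_of_deriv_nonneg (convex_Ico 0 R) hv.continuousOn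
    · rw [interior_Ico]; exact hdiffv
    · rw [interior_Ico]; exact fun x hx => le_of_lt (hVpos x hx)
  have hn2 : (0:ℝ) < (n:ℝ)+2 := by positivity
  -- STEP 4 : deriv u x ≤ x * v x ^ p / (n+2)
  have hvp : ∀ x ∈ J, HasDerivAt (fun r => v r ^ p) (deriv v x * p * v x ^ (p-1)) x :=
    fun x hx => (hvd x hx).rpow_const (Or.inl (ne_of_gt (hv0 x (hJs hx))))
  have hh1d : ∀ x ∈ J, HasDerivAt
      (fun r => r ^ (n+2) * (v r ^ p / ((n:ℝ)+2)) - r ^ (n+1) * deriv u r)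
      (x ^ (n+2) * (deriv v x * p * v x ^ (p-1)) / ((n:ℝ)+2)) x := by
    intro x hx
    have h1 : HasDerivAt (fun r : ℝ => r ^ (n+2)) (((n:ℝ)+2) * x ^ (n+1)) x := by
      simpa using hasDerivAt_pow (n+2) x
    have h2 := (h1.mul ((hvp x hx).div_const ((n:ℝ)+2))).sub (hg1d x hx)
    refine h2.congr_deriv ?_
    have hx0 : x ≠ 0 := ne_of_gt hx.1
    field_simp
    ring
  have hh1m : MonotoneOn
      (fun r => r ^ (n+2) * (v r ^ p / ((n:ℝ)+2)) - r ^ (n+1) * deriv u r) J := by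
    apply monotoneOn_of_deriv_nonneg (convex_Ioo 0 R)
    · exact fun x hx => (hh1d x hx).differentiableAt.continuousAt.continuousWithinAt
    · rw [interior_Ioo]
      exact fun x hx => (hh1d x hx).differentiableAt.differentiableWithinAt
    · rw [interior_Ioo]
      intro x hx
      rw [(hh1d x hx).deriv]
      have h1 := hVpos x hx
      have h2 := Real.rpow_pos_of_pos (hv0 x (hJs hx)) (p-1)
      have h3 := pow_pos hx.1 (n+2)
      positivity
  have hh10 : Tendsto (fun r => r ^ (n+2) * (v r ^ p / ((n:ℝ)+2)) - r ^ (n+1) * deriv u r)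
      (nhdsWithin (0:ℝ) (Set.Ioi 0)) (nhds 0) := by
    obtain ⟨B, hB0, hB⟩ := hvb0
    have h1 : Tendsto (fun r => r ^ (n+2) * (v r ^ p / ((n:ℝ)+2)))
        (nhdsWithin (0:ℝ) (Set.Ioi 0)) (nhds 0) := by
      apply tend_aux (n+2) _ B (by omega)
      filter_upwards [hB] with r hr
      rw [abs_div]
      have : |((n:ℝ)+2)| = (n:ℝ)+2 := abs_of_pos hn2
      rw [this]
      have h2 : |v r ^ p| / ((n:ℝ)+2) ≤ |v r ^ p| :=
        div_le_self (abs_nonneg _) (by linarith)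
      linarith
    simpa using h1.sub hg10
  have hh1nn := key0 _ hh1m hh10
  have hUub : ∀ x ∈ J, deriv u x ≤ x * v x ^ p / ((n:ℝ)+2) := by
    intro x hx
    have h1 := hh1nn x hx
    have h2 : x ^ (n+1) * deriv u x ≤ x ^ (n+1) * (x * v x ^ p / ((n:ℝ)+2)) := by
      have e1 : x ^ (n+2) = x ^ (n+1) * x := by ring
      rw [e1] at h1
      have e2 : x ^ (n+1) * (x * v x ^ p / ((n:ℝ)+2)) = x ^ (n+1) * x * (v x ^ p / ((n:ℝ)+2)) := by
        ring
      rw [e2]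
      linarith
    exact le_of_mul_le_mul_left (by linarith) (pow_pos hx.1 (n+1))
  have hU'lb : ∀ x ∈ J, v x ^ p / ((n:ℝ)+2) ≤ deriv (deriv u) x := by
    intro x hx
    have hx0 : x ≠ 0 := ne_of_gt hx.1
    have h1 := hUub x hx
    have h2 : ((n:ℝ)+1)/x * deriv u x ≤ ((n:ℝ)+1)/x * (x * v x ^ p / ((n:ℝ)+2)) :=
      mul_le_mul_of_nonneg_left h1 (div_nonneg (by positivity) (le_of_lt hx.1))
    have h3 : ((n:ℝ)+1)/x * (x * v x ^ p / ((n:ℝ)+2)) = ((n:ℝ)+1) * v x ^ p / ((n:ℝ)+2) := by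
      field_simp
    rw [hequ' x hx]
    rw [h3] at h2
    have h4 : v x ^ p - ((n:ℝ)+1) * v x ^ p / ((n:ℝ)+2) = v x ^ p / ((n:ℝ)+2) := by
      field_simp; ring
    linarith
  have hU'ub : ∀ x ∈ J, deriv (deriv u) x ≤ v x ^ p := by
    intro x hx
    rw [hequ' x hx]
    have h1 : 0 ≤ ((n:ℝ)+1)/x * deriv u x := by
      have := hUpos x hx
      have := hx.1
      positivity
    linarith
  -- equation for v with abs removed
  have heqv'' : ∀ x ∈ J, deriv (deriv v) x
      = Real.exp (deriv u x) - ((n:ℝ)+1)/x * deriv v x := by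
    intro x hx
    rw [heqv' x hx, abs_of_pos (hUpos x hx)]
  -- STEP 6 : analogous bounds for v
  have hexpb : ∀ᶠ r in nhdsWithin (0:ℝ) (Set.Ioi 0),
      |Real.exp (deriv u r) / ((n:ℝ)+2)| ≤ Real.exp Cu := by
    filter_upwards [hCu] with r hr
    have h1 : Real.exp (deriv u r) ≤ Real.exp Cu :=
      Real.exp_le_exp.2 (le_trans (le_abs_self _) hr)
    have h2 : (0:ℝ) < Real.exp (deriv u r) := Real.exp_pos _
    rw [abs_div, abs_of_pos h2, abs_of_pos hn2]
    calc Real.exp (deriv u r) / ((n:ℝ)+2) ≤ Real.exp (deriv u r) :=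
          div_le_self (le_of_lt h2) (by linarith)
    _ ≤ Real.exp Cu := h1
  have hh2d : ∀ x ∈ J, HasDerivAt
      (fun r => r ^ (n+2) * (Real.exp (deriv u r) / ((n:ℝ)+2)) - r ^ (n+1) * deriv v r)
      (x ^ (n+2) * (Real.exp (deriv u x) * deriv (deriv u) x) / ((n:ℝ)+2)) x := by
    intro x hx
    have h1 : HasDerivAt (fun r : ℝ => r ^ (n+2)) (((n:ℝ)+2) * x ^ (n+1)) x := by
      simpa using hasDerivAt_pow (n+2) x
    have h2 := (h1.mul (((hUd x hx).exp).div_const ((n:ℝ)+2))).sub (hg2d x hx)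
    refine h2.congr_deriv ?_
    rw [abs_of_pos (hUpos x hx)]
    have hx0 : x ≠ 0 := ne_of_gt hx.1
    field_simp
    ring
  have hh2m : MonotoneOn
      (fun r => r ^ (n+2) * (Real.exp (deriv u r) / ((n:ℝ)+2)) - r ^ (n+1) * deriv v r) J := by
    apply monotoneOn_of_deriv_nonneg (convex_Ioo 0 R)
    · exact fun x hx => (hh2d x hx).differentiableAt.continuousAt.continuousWithinAt
    · rw [interior_Ioo]
      exact fun x hx => (hh2d x hx).differentiableAt.differentiableWithinAt
    · rw [interior_Ioo]
      intro x hx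
      rw [(hh2d x hx).deriv]
      have h1 : 0 < deriv (deriv u) x :=
        lt_of_lt_of_le (div_pos (Real.rpow_pos_of_pos (hv0 x (hJs hx)) p) hn2) (hU'lb x hx)
      have h2 := Real.exp_pos (deriv u x)
      have h3 := pow_pos hx.1 (n+2)
      positivity
  have hh20 : Tendsto
      (fun r => r ^ (n+2) * (Real.exp (deriv u r) / ((n:ℝ)+2)) - r ^ (n+1) * deriv v r)
      (nhdsWithin (0:ℝ) (Set.Ioi 0)) (nhds 0) := by
    have h1 := tend_aux (n+2) (fun r => Real.exp (deriv u r) / ((n:ℝ)+2)) (Real.exp Cu)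
      (by omega) hexpb
    simpa using h1.sub hg20
  have hh2nn := key0 _ hh2m hh20
  have hVub : ∀ x ∈ J, deriv v x ≤ x * Real.exp (deriv u x) / ((n:ℝ)+2) := by
    intro x hx
    have h1 := hh2nn x hx
    have h2 : x ^ (n+1) * deriv v x ≤ x ^ (n+1) * (x * Real.exp (deriv u x) / ((n:ℝ)+2)) := by
      have e1 : x ^ (n+2) = x ^ (n+1) * x := by ring
      rw [e1] at h1
      have e2 : x ^ (n+1) * (x * Real.exp (deriv u x) / ((n:ℝ)+2))
          = x ^ (n+1) * x * (Real.exp (deriv u x) / ((n:ℝ)+2)) := by ring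
      rw [e2]
      linarith
    exact le_of_mul_le_mul_left (by linarith) (pow_pos hx.1 (n+1))
  have hV'lb : ∀ x ∈ J, Real.exp (deriv u x) / ((n:ℝ)+2) ≤ deriv (deriv v) x := by
    intro x hx
    have hx0 : x ≠ 0 := ne_of_gt hx.1
    have h1 := hVub x hx
    have h2 : ((n:ℝ)+1)/x * deriv v x ≤ ((n:ℝ)+1)/x * (x * Real.exp (deriv u x) / ((n:ℝ)+2)) :=
      mul_le_mul_of_nonneg_left h1 (div_nonneg (by positivity) (le_of_lt hx.1))
    have h3 : ((n:ℝ)+1)/x * (x * Real.exp (deriv u x) / ((n:ℝ)+2))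
        = ((n:ℝ)+1) * Real.exp (deriv u x) / ((n:ℝ)+2) := by field_simp
    rw [heqv'' x hx]
    rw [h3] at h2
    have h4 : Real.exp (deriv u x) - ((n:ℝ)+1) * Real.exp (deriv u x) / ((n:ℝ)+2)
        = Real.exp (deriv u x) / ((n:ℝ)+2) := by field_simp; ring
    linarith
  have hV'ub : ∀ x ∈ J, deriv (deriv v) x ≤ Real.exp (deriv u x) := by
    intro x hx
    rw [heqv'' x hx]
    have h1 : 0 ≤ ((n:ℝ)+1)/x * deriv v x := by
      have := hVpos x hx
      have := hx.1
      positivity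
    linarith
  have hU'pos : ∀ x ∈ J, 0 < deriv (deriv u) x := fun x hx =>
    lt_of_lt_of_le (div_pos (Real.rpow_pos_of_pos (hv0 x (hJs hx)) p) hn2) (hU'lb x hx)
  have hUmono : MonotoneOn (deriv u) J := by
    apply monotoneOn_of_deriv_nonneg (convex_Ioo 0 R) hUc
    · rw [interior_Ioo]
      exact fun x hx => (hUd x hx).differentiableAt.differentiableWithinAt
    · rw [interior_Ioo]
      exact fun x hx => le_of_lt (hU'pos x hx)
  -- if deriv u is bounded on J then u is bounded
  have ubound : ∀ K : ℝ, 0 ≤ K → (∀ x ∈ J, deriv u x ≤ K) →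
      ∃ M, ∀ r ∈ Set.Ico (0:ℝ) R, u r ≤ M := by
    intro K hK0 hK
    have hmono : MonotoneOn (fun r => K * r - u r) (Set.Ico 0 R) := by
      apply monotoneOn_of_deriv_nonneg (convex_Ico 0 R)
      · exact (continuous_const.mul continuous_id).continuousOn.sub hu.continuousOn
      · rw [interior_Ico]
        exact fun x hx =>
          (((hasDerivAt_id x).const_mul K).sub (hud x hx)).differentiableAt.differentiableWithinAt
      · rw [interior_Ico]
        intro x hx
        have hd : HasDerivAt (fun r => K * r - u r) (K * 1 - deriv u x) x :=
          ((hasDerivAt_id x).const_mul K).sub (hud x hx)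
        rw [hd.deriv]
        have := hK x hx
        linarith
    refine ⟨u 0 + K * R, fun r hr => ?_⟩
    have h0s : (0:ℝ) ∈ Set.Ico 0 R := Set.left_mem_Ico.2 hR
    have h1 := hmono h0s hr hr.1
    simp only [mul_zero] at h1
    have h2 : K * r ≤ K * R := mul_le_mul_of_nonneg_left (le_of_lt hr.2) hK0
    linarith
  -- the midpoint a = R/2
  have haJ : R/2 ∈ J := ⟨by linarith, by linarith⟩
  have haR : Set.Ico (R/2) R ⊆ J := fun x hx => ⟨lt_of_lt_of_le haJ.1 hx.1, hx.2⟩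
  set C₁ : ℝ := Real.exp (deriv u (R/2)) with hC₁def
  have hC₁pos : 0 < C₁ := Real.exp_pos _
  -- P₁ : exp(u') - (n+2) v^p v' is antitone on [R/2, R)
  have hP1d : ∀ x ∈ J, HasDerivAt
      (fun r => Real.exp (deriv u r) - ((n:ℝ)+2) * (v r ^ p * deriv v r))
      (Real.exp (deriv u x) * deriv (deriv u) x
        - ((n:ℝ)+2) * ((deriv v x * p * v x ^ (p-1)) * deriv v x + v x ^ p * deriv (deriv v) x))
      x := fun x hx =>
    ((hUd x hx).exp).sub (HasDerivAt.const_mul ((n:ℝ)+2) ((hvp x hx).mul (hVd x hx)))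
  have hP1le : ∀ x ∈ J, Real.exp (deriv u x) * deriv (deriv u) x
      - ((n:ℝ)+2) * ((deriv v x * p * v x ^ (p-1)) * deriv v x + v x ^ p * deriv (deriv v) x)
      ≤ 0 := by
    intro x hx
    have hE : (0:ℝ) < Real.exp (deriv u x) := Real.exp_pos _
    have hvpx : (0:ℝ) < v x ^ p := Real.rpow_pos_of_pos (hv0 x (hJs hx)) p
    have hvp1x : (0:ℝ) < v x ^ (p-1) := Real.rpow_pos_of_pos (hv0 x (hJs hx)) (p-1)
    have hVx := hVpos x hx
    have h1 : Real.exp (deriv u x) * deriv (deriv u) x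
        ≤ Real.exp (deriv u x) * v x ^ p :=
      mul_le_mul_of_nonneg_left (hU'ub x hx) (le_of_lt hE)
    have hEV : Real.exp (deriv u x) ≤ ((n:ℝ)+2) * deriv (deriv v) x := by
      have := hV'lb x hx
      rw [div_le_iff₀ hn2] at this
      linarith
    have h2 : Real.exp (deriv u x) * v x ^ p
        ≤ (((n:ℝ)+2) * deriv (deriv v) x) * v x ^ p :=
      mul_le_mul_of_nonneg_right hEV (le_of_lt hvpx)
    have h3 : 0 ≤ ((n:ℝ)+2) * ((deriv v x * p * v x ^ (p-1)) * deriv v x) := by positivity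
    nlinarith [h1, h2, h3]
  have hP1anti : AntitoneOn
      (fun r => Real.exp (deriv u r) - ((n:ℝ)+2) * (v r ^ p * deriv v r))
      (Set.Ico (R/2) R) := by
    apply antitoneOn_of_deriv_nonpos (convex_Ico _ _)
    · exact fun x hx => (hP1d x (haR hx)).differentiableAt.continuousAt.continuousWithinAt
    · rw [interior_Ico]
      exact fun x hx =>
        (hP1d x (haR (Set.Ioo_subset_Ico_self hx))).differentiableAt.differentiableWithinAt
    · rw [interior_Ico]
      intro x hx
      have hxJ := haR (Set.Ioo_subset_Ico_self hx)
      rw [(hP1d x hxJ).deriv]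
      exact hP1le x hxJ
  have key5 : ∀ r ∈ Set.Ico (R/2) R,
      Real.exp (deriv u r) ≤ C₁ + ((n:ℝ)+2) * (v r ^ p * deriv v r) := by
    intro r hr
    have ha : R/2 ∈ Set.Ico (R/2) R := Set.left_mem_Ico.2 (by linarith)
    have h1 := hP1anti ha hr hr.1
    have h2 : 0 ≤ ((n:ℝ)+2) * (v (R/2) ^ p * deriv v (R/2)) := by
      have := Real.rpow_pos_of_pos (hv0 _ (hJs haJ)) p
      have := hVpos _ haJ
      positivity
    simp only at h1
    rw [← hC₁def] at h1
    linarith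
  -- P₂ : v' - ((n+2)/(p+1)) v^{p+1} - C₁ r is antitone on [R/2, R)
  have hp1 : (0:ℝ) < p + 1 := by linarith
  have hvp1 : ∀ x ∈ J, HasDerivAt (fun r => v r ^ (p+1)) (deriv v x * (p+1) * v x ^ p) x := by
    intro x hx
    have h := (hvd x hx).rpow_const (p := p+1) (Or.inl (ne_of_gt (hv0 x (hJs hx))))
    have e : p + 1 - 1 = p := by ring
    rwa [e] at h
  have hP2d : ∀ x ∈ J, HasDerivAt
      (fun r => deriv v r - (((n:ℝ)+2)/(p+1)) * v r ^ (p+1) - C₁ * r)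
      (deriv (deriv v) x - (((n:ℝ)+2)/(p+1)) * (deriv v x * (p+1) * v x ^ p) - C₁ * 1) x :=
    fun x hx => ((hVd x hx).sub (HasDerivAt.const_mul (((n:ℝ)+2)/(p+1)) (hvp1 x hx))).sub
      ((hasDerivAt_id x).const_mul C₁)
  have hP2anti : AntitoneOn
      (fun r => deriv v r - (((n:ℝ)+2)/(p+1)) * v r ^ (p+1) - C₁ * r)
      (Set.Ico (R/2) R) := by
    apply antitoneOn_of_deriv_nonpos (convex_Ico _ _)
    · exact fun x hx => (hP2d x (haR hx)).differentiableAt.continuousAt.continuousWithinAt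
    · rw [interior_Ico]
      exact fun x hx =>
        (hP2d x (haR (Set.Ioo_subset_Ico_self hx))).differentiableAt.differentiableWithinAt
    · rw [interior_Ico]
      intro x hx
      have hxJ := haR (Set.Ioo_subset_Ico_self hx)
      rw [(hP2d x hxJ).deriv]
      have h1 : (((n:ℝ)+2)/(p+1)) * (deriv v x * (p+1) * v x ^ p)
          = ((n:ℝ)+2) * (v x ^ p * deriv v x) := by
        field_simp
      have h2 := hV'ub x hxJ
      have h3 := key5 x (Set.Ioo_subset_Ico_self hx)
      rw [h1]
      linarith
  set C₂ : ℝ := deriv v (R/2) + C₁ * R with hC₂def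
  set C₃ : ℝ := ((n:ℝ)+2)/(p+1) with hC₃def
  have hC₂pos : 0 < C₂ := by
    rw [hC₂def]
    nlinarith [hVpos _ haJ, hC₁pos, hR]
  have hC₃pos : 0 < C₃ := by rw [hC₃def]; positivity
  have key6 : ∀ r ∈ Set.Ico (R/2) R, deriv v r ≤ C₂ + C₃ * v r ^ (p+1) := by
    intro r hr
    have ha : R/2 ∈ Set.Ico (R/2) R := Set.left_mem_Ico.2 (by linarith)
    have h1 := hP2anti ha hr hr.1
    simp only at h1
    have h2 : 0 ≤ C₃ * v (R/2) ^ (p+1) := by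
      have := Real.rpow_pos_of_pos (hv0 _ (hJs haJ)) (p+1)
      positivity
    have h3 : C₁ * r ≤ C₁ * R := mul_le_mul_of_nonneg_left (le_of_lt hr.2) (le_of_lt hC₁pos)
    have h4 : 0 ≤ C₁ * (R/2) := by positivity
    rw [hC₂def]
    nlinarith
  -- key7 : exp(u') ≤ C₁ + C₄ v^{2p+1} on [R/2, R)
  set m : ℝ := v (R/2) with hmdef
  have hmpos : 0 < m := hv0 _ (hJs haJ)
  set C₄ : ℝ := ((n:ℝ)+2) * C₂ / m ^ (p+1) + ((n:ℝ)+2) * C₃ with hC₄def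
  have hmp1 : (0:ℝ) < m ^ (p+1) := Real.rpow_pos_of_pos hmpos (p+1)
  have hC₄pos : 0 < C₄ := by
    rw [hC₄def]
    have h1 : 0 < ((n:ℝ)+2) * C₂ / m ^ (p+1) := by positivity
    have h2 : 0 < ((n:ℝ)+2) * C₃ := by positivity
    linarith
  have key7 : ∀ r ∈ Set.Ico (R/2) R,
      Real.exp (deriv u r) ≤ C₁ + C₄ * v r ^ (2*p+1) := by
    intro r hr
    have hrs : r ∈ Set.Ico (0:ℝ) R := hJs (haR hr)
    have hvr : 0 < v r := hv0 r hrs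
    have hsplit : v r ^ (2*p+1) = v r ^ p * v r ^ (p+1) := by
      have e : 2*p+1 = p + (p+1) := by ring
      rw [e, Real.rpow_add hvr]
    have hmono' : m ≤ v r := hvmono (hJs haJ) hrs hr.1
    have hm1 : m ^ (p+1) ≤ v r ^ (p+1) :=
      Real.rpow_le_rpow (le_of_lt hmpos) hmono' (by linarith)
    have hvp : (0:ℝ) < v r ^ p := Real.rpow_pos_of_pos hvr p
    have h1 := key5 r hr
    have h2 := key6 r hr
    -- (n+2) v^p * deriv v ≤ (n+2) v^p (C₂ + C₃ v^{p+1})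
    have h3 : ((n:ℝ)+2) * (v r ^ p * deriv v r)
        ≤ ((n:ℝ)+2) * (v r ^ p * (C₂ + C₃ * v r ^ (p+1))) := by
      have := mul_le_mul_of_nonneg_left h2 (le_of_lt hvp)
      nlinarith
    -- v^p ≤ v^{2p+1} / m^{p+1}
    have h4 : v r ^ p * m ^ (p+1) ≤ v r ^ (2*p+1) := by
      rw [hsplit]
      exact mul_le_mul_of_nonneg_left hm1 (le_of_lt hvp)
    have h5 : ((n:ℝ)+2) * (v r ^ p * C₂) ≤ ((n:ℝ)+2) * C₂ / m ^ (p+1) * v r ^ (2*p+1) := by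
      have h40 : (0:ℝ) ≤ ((n:ℝ)+2) * C₂ := by positivity
      have h41 := mul_le_mul_of_nonneg_left h4 h40
      rw [div_mul_eq_mul_div, le_div_iff₀ hmp1]
      nlinarith [h41]
    have h6 : ((n:ℝ)+2) * (v r ^ p * (C₃ * v r ^ (p+1)))
        = ((n:ℝ)+2) * C₃ * v r ^ (2*p+1) := by
      rw [hsplit]; ring
    have h7 : ((n:ℝ)+2) * (v r ^ p * (C₂ + C₃ * v r ^ (p+1)))
        = ((n:ℝ)+2) * (v r ^ p * C₂) + ((n:ℝ)+2) * (v r ^ p * (C₃ * v r ^ (p+1))) := by ring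
    have h8 : C₁ + (((n:ℝ)+2) * C₂ / m ^ (p+1) + ((n:ℝ)+2) * C₃) * v r ^ (2*p+1)
        = C₁ + ((n:ℝ)+2) * C₂ / m ^ (p+1) * v r ^ (2*p+1)
          + ((n:ℝ)+2) * C₃ * v r ^ (2*p+1) := by ring
    rw [hC₄def, h8]
    clear_value C₄ m C₃ C₂ C₁
    linarith [h1, h3, h5, h6, h7]
  -- ===== final case analysis =====
  by_cases hvb : ∃ M, ∀ r ∈ Set.Ico (0:ℝ) R, v r ≤ M
  · left
    refine ⟨?_, hvb⟩
    obtain ⟨M, hM⟩ := hvb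
    have h0s : (0:ℝ) ∈ Set.Ico 0 R := Set.left_mem_Ico.2 hR
    have hM0 : 0 < M := lt_of_lt_of_le (hv0 0 h0s) (hM 0 h0s)
    apply ubound (R * M ^ p / ((n:ℝ)+2)) (by positivity)
    intro x hx
    have h1 : v x ^ p ≤ M ^ p :=
      Real.rpow_le_rpow (le_of_lt (hv0 x (hJs hx))) (hM x (hJs hx)) (le_of_lt hp)
    have h2 : 0 ≤ v x ^ p := Real.rpow_nonneg (le_of_lt (hv0 x (hJs hx))) p
    have h3 : x * v x ^ p ≤ R * M ^ p := by nlinarith [hx.1, hx.2]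
    calc deriv u x ≤ x * v x ^ p / ((n:ℝ)+2) := hUub x hx
    _ ≤ R * M ^ p / ((n:ℝ)+2) := (div_le_div_iff_of_pos_right hn2).2 h3
  · right
    have htend : Tendsto v (nhdsWithin R (Set.Iio R)) atTop := by
      rw [tendsto_atTop]
      intro bb
      push_neg at hvb
      obtain ⟨r₀, hr₀, hb⟩ := hvb bb
      filter_upwards [Ioo_mem_nhdsLT_of_mem (show R ∈ Set.Ioc r₀ R from ⟨hr₀.2, le_refl R⟩)]
        with r hr
      have h1 : v r₀ ≤ v r :=
        hvmono hr₀ ⟨le_trans hr₀.1 (le_of_lt hr.1), hr.2⟩ (le_of_lt hr.1)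
      linarith
    refine ⟨?_, htend⟩
    clear_value m C₄ C₃ C₂ C₁
    by_cases hub : ∃ K, ∀ x ∈ J, deriv u x ≤ K
    · obtain ⟨K, hK⟩ := hub
      exact ubound (max K 0) (le_max_right K 0) (fun x hx => le_trans (hK x hx) (le_max_left K 0))
    · push_neg at hub
      obtain ⟨x₀, hx₀J, hx₀⟩ := hub (Real.log (2*C₁))
      set b : ℝ := max x₀ (R/2) with hbdef
      have hbJ : b ∈ J := ⟨lt_of_lt_of_le hx₀J.1 (le_max_left _ _), max_lt hx₀J.2 haJ.2⟩
      have hba : R/2 ≤ b := le_max_right _ _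
      have hUb : Real.log (2*C₁) < deriv u b :=
        lt_of_lt_of_le hx₀ (hUmono hx₀J hbJ (le_max_left _ _))
      have h2C₁ : (0:ℝ) < 2*C₁ := by linarith
      have hbR : Set.Ico b R ⊆ J := fun x hx => ⟨lt_of_lt_of_le hbJ.1 hx.1, hx.2⟩
      have hbR2 : Set.Ico b R ⊆ Set.Ico (R/2) R := fun x hx => ⟨le_trans hba hx.1, hx.2⟩
      have hElb : ∀ r ∈ Set.Ico b R, 2*C₁ ≤ Real.exp (deriv u r) := by
        intro r hr
        have h1 : deriv u b ≤ deriv u r := hUmono hbJ (hbR hr) hr.1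
        calc 2*C₁ = Real.exp (Real.log (2*C₁)) := (Real.exp_log h2C₁).symm
        _ ≤ Real.exp (deriv u r) := Real.exp_le_exp.2 (by linarith)
      set θ : ℝ := p / (2*p+1) with hθdef
      have hθpos : 0 < θ := by rw [hθdef]; positivity
      have h2C₄ : (0:ℝ) < 2*C₄ := by linarith
      have h2C₄θ : (0:ℝ) < (2*C₄) ^ θ := Real.rpow_pos_of_pos h2C₄ θ
      have hvplb : ∀ r ∈ Set.Ico b R,
          Real.exp (θ * deriv u r) / (2*C₄) ^ θ ≤ v r ^ p := by
        intro r hr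
        have h1 := key7 r (hbR2 hr)
        have h2 := hElb r hr
        have h3 : Real.exp (deriv u r) / (2*C₄) ≤ v r ^ (2*p+1) := by
          rw [div_le_iff₀ h2C₄]
          nlinarith
        have h4 : (Real.exp (deriv u r) / (2*C₄)) ^ θ ≤ (v r ^ (2*p+1)) ^ θ :=
          Real.rpow_le_rpow (by positivity) h3 (le_of_lt hθpos)
        have hvr := hv0 r (hJs (hbR hr))
        have h5 : (v r ^ (2*p+1)) ^ θ = v r ^ p := by
          rw [← Real.rpow_mul (le_of_lt hvr)]
          congr 1
          rw [hθdef]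
          field_simp
        have h6 : (Real.exp (deriv u r) / (2*C₄)) ^ θ
            = Real.exp (θ * deriv u r) / (2*C₄) ^ θ := by
          rw [Real.div_rpow (le_of_lt (Real.exp_pos _)) (le_of_lt h2C₄)]
          congr 1
          rw [Real.rpow_def_of_pos (Real.exp_pos _), Real.log_exp, mul_comm]
        rw [← h5, ← h6]
        exact h4
      set c : ℝ := 1 / (((n:ℝ)+2) * (2*C₄) ^ θ) with hcdef
      have hcpos : 0 < c := by rw [hcdef]; positivity
      have hU'exp : ∀ x ∈ Set.Ico b R,
          c * Real.exp (θ * deriv u x) ≤ deriv (deriv u) x := by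
        intro x hx
        have h1 := hU'lb x (hbR hx)
        have h2 := hvplb x hx
        have h3 : Real.exp (θ * deriv u x) / (2*C₄) ^ θ / ((n:ℝ)+2)
            ≤ v x ^ p / ((n:ℝ)+2) := (div_le_div_iff_of_pos_right hn2).2 h2
        have h4 : c * Real.exp (θ * deriv u x)
            = Real.exp (θ * deriv u x) / (2*C₄) ^ θ / ((n:ℝ)+2) := by
          rw [hcdef]
          have hne : ((2*C₄) ^ θ) ≠ 0 := ne_of_gt h2C₄θ
          field_simp
        linarith
      -- G(r) = exp(-(θ u')) + cθ r is antitone on [b, R)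
      have hGd : ∀ x ∈ J, HasDerivAt (fun r => Real.exp (-(θ * deriv u r)) + c*θ*r)
          (Real.exp (-(θ * deriv u x)) * (-(θ * deriv (deriv u) x)) + c*θ*1) x := fun x hx =>
        ((((hUd x hx).const_mul θ).neg).exp).add ((hasDerivAt_id x).const_mul (c*θ))
      have hGanti : AntitoneOn (fun r => Real.exp (-(θ * deriv u r)) + c*θ*r)
          (Set.Ico b R) := by
        apply antitoneOn_of_deriv_nonpos (convex_Ico _ _)
        · exact fun x hx => (hGd x (hbR hx)).differentiableAt.continuousAt.continuousWithinAt
        · rw [interior_Ico]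
          exact fun x hx =>
            (hGd x (hbR (Set.Ioo_subset_Ico_self hx))).differentiableAt.differentiableWithinAt
        · rw [interior_Ico]
          intro x hx
          have hxI : x ∈ Set.Ico b R := Set.Ioo_subset_Ico_self hx
          have hxJ := hbR hxI
          rw [(hGd x hxJ).deriv]
          have h1 := hU'exp x hxI
          have hEθ : (0:ℝ) < Real.exp (-(θ * deriv u x)) := Real.exp_pos _
          have hprod : Real.exp (-(θ * deriv u x)) * Real.exp (θ * deriv u x) = 1 := by
            rw [← Real.exp_add]
            norm_num
          have h2 : c ≤ Real.exp (-(θ * deriv u x)) * deriv (deriv u) x := by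
            have h3 := mul_le_mul_of_nonneg_left h1 (le_of_lt hEθ)
            calc c = c * (Real.exp (-(θ * deriv u x)) * Real.exp (θ * deriv u x)) := by
                  rw [hprod]; ring
            _ = Real.exp (-(θ * deriv u x)) * (c * Real.exp (θ * deriv u x)) := by ring
            _ ≤ Real.exp (-(θ * deriv u x)) * deriv (deriv u) x := h3
          nlinarith [mul_le_mul_of_nonneg_left h2 (le_of_lt hθpos)]
      -- lower bound for exp(-(θ u'))
      have hexplb : ∀ r ∈ Set.Ico b R, c*θ*(R - r) ≤ Real.exp (-(θ * deriv u r)) := by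
        intro r hr
        have hlim : Tendsto (fun r' => c*θ*(r' - r)) (nhdsWithin R (Set.Iio R))
            (nhds (c*θ*(R - r))) := by
          apply Tendsto.mono_left _ nhdsWithin_le_nhds
          exact (continuous_const.mul (continuous_id.sub continuous_const)).tendsto R
        refine le_of_tendsto hlim ?_
        filter_upwards [Ioo_mem_nhdsLT_of_mem (show R ∈ Set.Ioc r R from ⟨hr.2, le_refl R⟩)]
          with r' hr'
        have hr'I : r' ∈ Set.Ico b R := ⟨le_trans hr.1 (le_of_lt hr'.1), hr'.2⟩
        have h1 := hGanti hr hr'I (le_of_lt hr'.1)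
        simp only at h1
        have h2 : 0 < Real.exp (-(θ * deriv u r')) := Real.exp_pos _
        nlinarith
      -- logarithmic bound for u'
      set D : ℝ := -Real.log (c*θ) / θ with hDdef
      have hUlog : ∀ r ∈ Set.Ico b R,
          deriv u r ≤ D - (1/θ) * Real.log (R - r) := by
        intro r hr
        have hRr : 0 < R - r := by linarith [hr.2]
        have hcθ : (0:ℝ) < c*θ := by positivity
        have h0 : 0 < c*θ*(R - r) := by positivity
        have h1 := hexplb r hr
        have h2 : Real.log (c*θ*(R-r)) ≤ -(θ * deriv u r) := (Real.log_le_iff_le_exp h0).2 h1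
        have h3 : Real.log (c*θ*(R-r)) = Real.log (c*θ) + Real.log (R-r) :=
          Real.log_mul (ne_of_gt hcθ) (ne_of_gt hRr)
        have h5 : deriv u r ≤ (-Real.log (c*θ) - Real.log (R-r))/θ := by
          rw [le_div_iff₀ hθpos]
          nlinarith
        have h6 : (-Real.log (c*θ) - Real.log (R-r))/θ
            = -Real.log (c*θ)/θ - (1/θ) * Real.log (R-r) := by
          field_simp
        rw [hDdef]
        linarith
      -- Φ antitone on [b, R)
      have hΦd : ∀ x ∈ Set.Ico b R, HasDerivAt
          (fun r => u r - D*r + (1/θ)*((R - r) - (R - r)*Real.log (R - r)))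
          (deriv u x - D*1 + (1/θ)*((0-1) - ((0-1)*Real.log (R - x)
            + (R - x)*((0-1)/(R - x))))) x := by
        intro x hx
        have hxJ := hbR hx
        have hRx : 0 < R - x := by linarith [hx.2]
        have hs : HasDerivAt (fun r : ℝ => R - r) (0 - 1) x :=
          (hasDerivAt_const x R).sub (hasDerivAt_id x)
        have hmul : HasDerivAt (fun r => (R - r)*Real.log (R - r))
            ((0-1)*Real.log (R - x) + (R - x)*((0-1)/(R - x))) x :=
          hs.mul (hs.log (ne_of_gt hRx))
        exact ((hud x hxJ).sub ((hasDerivAt_id x).const_mul D)).add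
          ((hs.sub hmul).const_mul (1/θ))
      have hΦanti : AntitoneOn
          (fun r => u r - D*r + (1/θ)*((R - r) - (R - r)*Real.log (R - r)))
          (Set.Ico b R) := by
        apply antitoneOn_of_deriv_nonpos (convex_Ico _ _)
        · exact fun x hx => (hΦd x hx).differentiableAt.continuousAt.continuousWithinAt
        · rw [interior_Ico]
          exact fun x hx =>
            (hΦd x (Set.Ioo_subset_Ico_self hx)).differentiableAt.differentiableWithinAt
        · rw [interior_Ico]
          intro x hx
          have hxI : x ∈ Set.Ico b R := Set.Ioo_subset_Ico_self hx
          rw [(hΦd x hxI).deriv]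
          have hRx : 0 < R - x := by linarith [hx.2]
          have hsimp : deriv u x - D*1 + (1/θ)*((0-1) - ((0-1)*Real.log (R - x)
              + (R - x)*((0-1)/(R - x))))
              = deriv u x - D + (1/θ)*Real.log (R - x) := by
            field_simp
            ring
          rw [hsimp]
          have h1 := hUlog x hxI
          nlinarith [hθpos]
      -- final bound for u
      set M₁ : ℝ := (u b - D*b + (1/θ)*((R - b) - (R - b)*Real.log (R - b)))
        + |D| * R + (1/θ)*(R*(1+|Real.log R|)) with hM₁def
      refine ⟨max (u b) M₁, ?_⟩
      intro r hr
      rcases le_or_gt r b with hcase | hcase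
      · have h1 : u r ≤ u b := humono hr (hJs hbJ) hcase
        exact le_trans h1 (le_max_left _ _)
      · have hrI : r ∈ Set.Ico b R := ⟨le_of_lt hcase, hr.2⟩
        have h1 := hΦanti (Set.left_mem_Ico.2 hbJ.2) hrI (le_of_lt hcase)
        simp only at h1
        have hRr : 0 < R - r := by linarith [hr.2]
        have hRrR : R - r ≤ R := by linarith [hr.1]
        have h2 : (R - r)*(Real.log (R - r) - 1) ≤ R*(1+|Real.log R|) :=
          aux_xlog hR hRr hRrR
        have h3 : D*r ≤ |D| * R := by
          calc D*r ≤ |D*r| := le_abs_self _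
          _ = |D| * |r| := abs_mul D r
          _ ≤ |D| * R := by
              have : |r| = r := abs_of_nonneg hr.1
              rw [this]
              exact mul_le_mul_of_nonneg_left (le_of_lt hr.2) (abs_nonneg D)
        have h4 : (1/θ)*((R - r)*(Real.log (R - r) - 1)) ≤ (1/θ)*(R*(1+|Real.log R|)) :=
          mul_le_mul_of_nonneg_left h2 (by positivity)
        have h5 : -((1/θ)*((R - r) - (R - r)*Real.log (R - r)))
            = (1/θ)*((R - r)*(Real.log (R - r) - 1)) := by ring
        rw [hM₁def]
        refine le_trans ?_ (le_max_right _ _)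
        nlinarith [h1, h3, h4]
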